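/- For real s > 3, a prime p, and a nonnegative integer v, (1 − p^{−1})^{−2} ∫_{(t₁₁,t₂₂) ∈ Z_p², |t₁₁| = |t₂₂|} |t₁₁|^{s−2} |t₂₂|^{s−2} dμ = ζ_p(2s−2), and (1 − p^{−1})^{−2} ∫_{|t₁₁| = p|t₂₂|} |t₁₁|^{s−2}|t₂₂|^{s−2} dμ = p^{1−s} ζ_p(2s−2). -/

import Mathlib

open MeasureTheory TopologicalSpace
open ENNReal

noncomputable instance (p : ℕ) [Fact p.Prime] : MeasurableSpace ℤ_[p] := borel _
instance (p : ℕ) [Fact p.Prime] : BorelSpace ℤ_[p] := ⟨rfl⟩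

/-- `ℤ_p` as a positive compact subset of itself. -/
noncomputable def univPC (p : ℕ) [Fact p.Prime] : PositiveCompacts ℤ_[p] :=
  ⟨⟨Set.univ, isCompact_univ⟩, by simp⟩

/-- The Haar measure on `ℤ_p`, normalized so that `μ (ℤ_p) = 1`. -/
noncomputable def μ (p : ℕ) [Fact p.Prime] : Measure ℤ_[p] :=
  Measure.addHaarMeasure (univPC p)

noncomputable def zetap (p : ℕ) (s : ℝ) : ℝ := (1 - (p : ℝ) ^ (-s))⁻¹

namespace St16
variable (p : ℕ) [Fact p.Prime]

instance : IsProbabilityMeasure (μ p) := ⟨Measure.addHaarMeasure_self⟩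

instance : (μ p).IsAddLeftInvariant :=
  inferInstanceAs (Measure.addHaarMeasure (univPC p)).IsAddLeftInvariant

instance : (μ p).Regular :=
  inferInstanceAs (Measure.addHaarMeasure (univPC p)).Regular

def B (n : ℕ) : Set ℤ_[p] := {x | ‖x‖ ≤ (p:ℝ) ^ (-(n:ℤ))}
def S (n : ℕ) : Set ℤ_[p] := {x | ‖x‖ = (p:ℝ) ^ (-(n:ℤ))}

lemma measurableSet_B (n : ℕ) : MeasurableSet (B p n) :=
  (isClosed_le continuous_norm continuous_const).measurableSet

lemma measurableSet_S (n : ℕ) : MeasurableSet (S p n) :=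
  (isClosed_eq continuous_norm continuous_const).measurableSet

lemma measure_B (n : ℕ) : μ p (B p n) = ((p:ℝ≥0∞) ^ n)⁻¹ := by
  have hp : p.Prime := Fact.out
  set C : ℕ → Set ℤ_[p] := fun i => (fun x => -(i:ℤ_[p]) + x) ⁻¹' B p n with hC
  have hmeas : ∀ i, MeasurableSet (C i) :=
    fun i => (measurableSet_B p n).preimage (measurable_const_add _)
  have hCm : ∀ i, μ p (C i) = μ p (B p n) := fun i => measure_preimage_add _ _ _
  have hmem : ∀ (i : ℕ) (x : ℤ_[p]), x ∈ C i ↔ ‖x - (i:ℤ_[p])‖ ≤ (p:ℝ)^(-(n:ℤ)) := by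
    intro i x
    simp [hC, B, neg_add_eq_sub]
  have hcover : ⋃ i ∈ Finset.range (p^n), C i = Set.univ := by
    ext x
    simp only [Set.mem_iUnion, Set.mem_univ, iff_true, Finset.mem_range]
    refine ⟨x.appr n, x.appr_lt n, ?_⟩
    rw [hmem]
    exact ((x - x.appr n).norm_le_pow_iff_mem_span_pow n).mpr (x.appr_spec n)
  have hdisj : Set.PairwiseDisjoint (↑(Finset.range (p^n)) : Set ℕ) C := by
    intro i hi j hj hij
    simp only [Finset.coe_range, Set.mem_Iio] at hi hj
    refine Set.disjoint_left.mpr fun x hxi hxj => hij ?_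
    rw [hmem] at hxi hxj
    have h1 : ‖((((i:ℤ) - (j:ℤ)) : ℤ) : ℤ_[p])‖ ≤ (p:ℝ)^(-(n:ℤ)) := by
      have : ((((i:ℤ) - (j:ℤ)) : ℤ) : ℤ_[p]) = (x - (j:ℤ_[p])) - (x - (i:ℤ_[p])) := by
        push_cast; ring
      rw [this, sub_eq_add_neg]
      exact le_trans (PadicInt.nonarchimedean _ _)
        (max_le hxj (by rwa [norm_neg]))
    rw [PadicInt.norm_int_le_pow_iff_dvd] at h1
    have hi' : (i:ℤ) < (p:ℤ)^n := by exact_mod_cast hi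
    have hj' : (j:ℤ) < (p:ℤ)^n := by exact_mod_cast hj
    have := Int.eq_zero_of_abs_lt_dvd h1 (by
      rw [abs_sub_lt_iff]
      constructor <;> omega)
    omega
  have hsum : (1:ℝ≥0∞) = (p^n : ℕ) * μ p (B p n) := by
    have := measure_biUnion_finset (μ := μ p) hdisj (fun i _ => hmeas i)
    rw [hcover, measure_univ] at this
    rw [this, Finset.sum_congr rfl (fun i _ => hCm i), Finset.sum_const,
      Finset.card_range, nsmul_eq_mul]
  have hpn : ((p:ℝ≥0∞) ^ n) ≠ 0 := by
    simp [hp.pos.ne']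
  have hpn' : ((p:ℝ≥0∞) ^ n) ≠ ⊤ := by
    exact ENNReal.pow_ne_top (ENNReal.natCast_ne_top p)
  have h2 : (p:ℝ≥0∞)^n * μ p (B p n) = 1 := by
    rw [← Nat.cast_pow]; exact hsum.symm
  calc μ p (B p n) = ((p:ℝ≥0∞)^n)⁻¹ * ((p:ℝ≥0∞)^n * μ p (B p n)) := by
        rw [← mul_assoc, ENNReal.inv_mul_cancel hpn hpn', one_mul]
    _ = ((p:ℝ≥0∞)^n)⁻¹ := by rw [h2, mul_one]

lemma one_lt_p : (1:ℝ) < p := by exact_mod_cast (Fact.out : p.Prime).one_lt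

lemma a_pos : (0:ℝ) < (p:ℝ)⁻¹ := inv_pos.mpr (by linarith [one_lt_p p])
lemma a_lt_one : (p:ℝ)⁻¹ < 1 := inv_lt_one_of_one_lt₀ (one_lt_p p)

lemma S_eq (n : ℕ) : S p n = B p n \ B p (n+1) := by
  have hp1 := one_lt_p p
  have hlt : (p:ℝ) ^ (-((n+1:ℕ):ℤ)) < (p:ℝ) ^ (-(n:ℤ)) := by
    apply zpow_lt_zpow_right₀ hp1; push_cast; omega
  ext x
  simp only [S, B, Set.mem_setOf_eq, Set.mem_diff, not_le]
  constructor
  · intro h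
    exact ⟨le_of_eq h, by rw [h]; exact hlt⟩
  · rintro ⟨h1, h2⟩
    have hx : x ≠ 0 := by
      rintro rfl
      rw [norm_zero] at h2
      exact absurd h2 (not_lt.mpr (zpow_nonneg (by linarith) _))
    rw [PadicInt.norm_eq_zpow_neg_valuation hx] at h1 h2 ⊢
    have hval : x.valuation = n := by
      have e1 : -x.valuation ≤ -(n:ℤ) := (zpow_le_zpow_iff_right₀ hp1).mp h1
      have e2 : -((n+1:ℕ):ℤ) < -x.valuation := (zpow_lt_zpow_iff_right₀ hp1).mp h2
      push_cast at e2
      omega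
    rw [hval]

lemma B_succ_subset (n : ℕ) : B p (n+1) ⊆ B p n := by
  intro x hx
  refine le_trans hx (zpow_le_zpow_right₀ (le_of_lt (one_lt_p p)) ?_)
  push_cast; omega

lemma measure_S (n : ℕ) : μ p (S p n) = ((p:ℝ≥0∞)^n)⁻¹ - ((p:ℝ≥0∞)^(n+1))⁻¹ := by
  rw [S_eq, measure_diff (B_succ_subset p n)
    ((measurableSet_B p (n+1)).nullMeasurableSet) (measure_ne_top _ _),
    measure_B, measure_B]

lemma measure_S_toReal (n : ℕ) :
    (μ p (S p n)).toReal = ((p:ℝ)⁻¹)^n * (1 - (p:ℝ)⁻¹) := by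
  have hp1 : (1:ℝ≥0∞) ≤ (p:ℝ≥0∞) := by
    exact_mod_cast Nat.one_le_cast.mpr (Fact.out : p.Prime).one_lt.le
  have hle : ((p:ℝ≥0∞)^(n+1))⁻¹ ≤ ((p:ℝ≥0∞)^n)⁻¹ :=
    ENNReal.inv_le_inv.mpr (pow_le_pow_right₀ hp1 (by omega))
  have hp0 : (0:ℝ) < p := by linarith [one_lt_p p]
  rw [measure_S, ENNReal.toReal_sub_of_le hle (by simp [(Fact.out : p.Prime).pos.ne'])]
  rw [ENNReal.toReal_inv, ENNReal.toReal_inv, ENNReal.toReal_pow, ENNReal.toReal_pow,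
    ENNReal.toReal_natCast, ← inv_pow, ← inv_pow]
  ring

lemma measure_singleton_zero : μ p {(0:ℤ_[p])} = 0 := by
  have hle : ∀ n : ℕ, μ p {(0:ℤ_[p])} ≤ ((p:ℝ≥0∞)⁻¹)^n := by
    intro n
    rw [← ENNReal.inv_pow, ← measure_B]
    apply measure_mono
    intro x hx
    simp only [Set.mem_singleton_iff] at hx
    simp [B, hx, zpow_nonneg (by linarith [one_lt_p p] : (0:ℝ) ≤ p)]
  have htend : Filter.Tendsto (fun n : ℕ => ((p:ℝ≥0∞)⁻¹)^n) Filter.atTop (nhds 0) := by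
    apply ENNReal.tendsto_pow_atTop_nhds_zero_of_lt_one
    rw [ENNReal.inv_lt_one]
    exact_mod_cast Nat.one_lt_cast.mpr (Fact.out : p.Prime).one_lt
  simpa using ge_of_tendsto' htend hle

lemma mem_S_iff (n : ℕ) (x : ℤ_[p]) : x ∈ S p n ↔ ‖x‖ = (p:ℝ) ^ (-(n:ℤ)) := Iff.rfl

lemma mem_S_valuation {x : ℤ_[p]} (hx : x ≠ 0) : x ∈ S p x.valuation := by
  rw [mem_S_iff, PadicInt.norm_eq_zpow_neg_valuation hx]

lemma S_disjoint : Pairwise (Function.onFun Disjoint (S p)) := by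
  intro n m hnm
  simp only [Function.onFun]
  rw [Set.disjoint_left]
  intro x hn hm
  rw [mem_S_iff] at hn hm
  rw [hn] at hm
  have := zpow_right_injective₀ (by linarith [one_lt_p p] : (0:ℝ) < p)
    (one_lt_p p).ne' hm
  omega

lemma f_continuous (s : ℝ) (hs : 3 < s) :
    Continuous (fun t : ℤ_[p] × ℤ_[p] => ‖t.1‖ ^ (s-2) * ‖t.2‖ ^ (s-2)) :=
  ((continuous_fst.norm).rpow_const (fun _ => Or.inr (by linarith))).mul
    ((continuous_snd.norm).rpow_const (fun _ => Or.inr (by linarith)))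

lemma f_integrable (s : ℝ) (hs : 3 < s) :
    Integrable (fun t : ℤ_[p] × ℤ_[p] => ‖t.1‖ ^ (s-2) * ‖t.2‖ ^ (s-2))
      ((μ p).prod (μ p)) := by
  refine (integrable_const (1:ℝ)).mono'
    (f_continuous p s hs).aestronglyMeasurable (ae_of_all _ fun t => ?_)
  have h1 : ‖t.1‖ ^ (s-2) ≤ 1 :=
    Real.rpow_le_one (norm_nonneg _) t.1.norm_le_one (by linarith)
  have h2 : ‖t.2‖ ^ (s-2) ≤ 1 :=
    Real.rpow_le_one (norm_nonneg _) t.2.norm_le_one (by linarith)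
  have hn1 : (0:ℝ) ≤ ‖t.1‖ ^ (s-2) := Real.rpow_nonneg (norm_nonneg _) _
  have hn2 : (0:ℝ) ≤ ‖t.2‖ ^ (s-2) := Real.rpow_nonneg (norm_nonneg _) _
  rw [Real.norm_eq_abs, abs_of_nonneg (mul_nonneg hn1 hn2)]
  calc ‖t.1‖ ^ (s-2) * ‖t.2‖ ^ (s-2) ≤ 1 * 1 := mul_le_mul h1 h2 hn2 zero_le_one
    _ = 1 := mul_one 1

lemma main_calc (k : ℕ) (s : ℝ) (hs : 3 < s) :
    ∫ t in ⋃ n : ℕ, (S p n ×ˢ S p (n+k)),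
      ‖t.1‖ ^ (s - 2) * ‖t.2‖ ^ (s - 2) ∂((μ p).prod (μ p)) =
    (1 - (p:ℝ)⁻¹)^2 * (((p:ℝ)⁻¹) ^ (s-1)) ^ k *
      (1 - ((p:ℝ)⁻¹) ^ (2*s-2))⁻¹ := by
  have ha0 : (0:ℝ) < (p:ℝ)⁻¹ := a_pos p
  have ha1 : (p:ℝ)⁻¹ < 1 := a_lt_one p
  set a : ℝ := (p:ℝ)⁻¹ with ha
  set b : ℝ := a ^ (s-2) with hb
  have hb0 : 0 ≤ b := Real.rpow_nonneg ha0.le _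
  have hm : ∀ n : ℕ, MeasurableSet (S p n ×ˢ S p (n+k)) :=
    fun n => (measurableSet_S p n).prod (measurableSet_S p _)
  have hd : Pairwise (Function.onFun Disjoint (fun n : ℕ => S p n ×ˢ S p (n+k))) := by
    intro n m hnm
    simp only [Function.onFun]
    rw [Set.disjoint_left]
    intro q hq1 hq2
    exact Set.disjoint_left.mp (S_disjoint p hnm) hq1.1 hq2.1
  have hz : ∀ m : ℕ, ((p:ℝ) ^ (-(m:ℤ))) ^ (s-2) = b ^ m := by
    intro m
    rw [zpow_neg, zpow_natCast, ← inv_pow, ← ha, hb,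
      ← Real.rpow_natCast a m, ← Real.rpow_mul ha0.le, mul_comm,
      Real.rpow_mul ha0.le, Real.rpow_natCast]
  have hterm : ∀ n : ℕ, (∫ t in S p n ×ˢ S p (n+k),
      ‖t.1‖ ^ (s - 2) * ‖t.2‖ ^ (s - 2) ∂((μ p).prod (μ p))) =
      ((1-a)^2 * (a*b)^k) * ((a*b)^2)^n := by
    intro n
    rw [setIntegral_congr_fun (hm n)
      (g := fun _ => ((p:ℝ) ^ (-(n:ℤ))) ^ (s-2) * ((p:ℝ) ^ (-((n+k:ℕ):ℤ))) ^ (s-2))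
      (fun t ht => by rw [ht.1, ht.2]),
      setIntegral_const, measureReal_def, Measure.prod_prod, ENNReal.toReal_mul,
      measure_S_toReal, measure_S_toReal, smul_eq_mul, hz, hz, ← ha]
    ring
  have hab : a * b = a ^ (s-1) := by
    nth_rewrite 1 [← Real.rpow_one a]
    rw [hb, ← Real.rpow_add ha0]
    ring_nf
  have hab2 : (a*b)^2 = a ^ (2*s-2) := by
    rw [hab, ← Real.rpow_natCast (a ^ (s-1)) 2, ← Real.rpow_mul ha0.le]
    norm_num
    congr 1
    ring
  rw [integral_iUnion hm hd (f_integrable p s hs).integrableOn]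
  simp only [hterm]
  rw [tsum_mul_left, tsum_geometric_of_lt_one (by positivity)
    (by rw [hab2]; exact Real.rpow_lt_one ha0.le ha1 (by linarith)), hab2, hab]

lemma prod_zero_zero_null :
    ((μ p).prod (μ p)) {((0:ℤ_[p]), (0:ℤ_[p]))} = 0 := by
  rw [← Set.singleton_prod_singleton, Measure.prod_prod, measure_singleton_zero]
  simp

lemma Aeq1 : {q : ℤ_[p] × ℤ_[p] | ‖q.1‖ = ‖q.2‖}
    =ᵐ[(μ p).prod (μ p)] ⋃ n : ℕ, (S p n ×ˢ S p (n+0)) := by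
  rw [MeasureTheory.ae_eq_set]
  constructor
  · refine measure_mono_null ?_ (prod_zero_zero_null p)
    rintro ⟨x, y⟩ ⟨hmem, hnot⟩
    simp only [Set.mem_setOf_eq] at hmem
    by_cases hx : x = 0
    · subst hx
      simp only [norm_zero] at hmem
      have : y = 0 := norm_eq_zero.mp hmem.symm
      simp [this]
    · exfalso
      apply hnot
      rw [Set.mem_iUnion]
      refine ⟨x.valuation, mem_S_valuation p hx, ?_⟩
      show y ∈ S p (x.valuation + 0)
      rw [Nat.add_zero, mem_S_iff, ← hmem]
      exact mem_S_valuation p hx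
  · have : (⋃ n : ℕ, (S p n ×ˢ S p (n+0))) \ {q : ℤ_[p] × ℤ_[p] | ‖q.1‖ = ‖q.2‖} = ∅ := by
      rw [Set.diff_eq_empty]
      rintro ⟨x, y⟩ hq
      rw [Set.mem_iUnion] at hq
      obtain ⟨n, h1, h2⟩ := hq
      rw [mem_S_iff] at h1 h2
      simp only [Set.mem_setOf_eq]
      rw [h1, h2]
      norm_num
    rw [this]
    simp

lemma Aeq2 : {q : ℤ_[p] × ℤ_[p] | ‖q.1‖ = p * ‖q.2‖}
    =ᵐ[(μ p).prod (μ p)] ⋃ n : ℕ, (S p n ×ˢ S p (n+1)) := by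
  have hp0 : (0:ℝ) < p := by linarith [one_lt_p p]
  rw [MeasureTheory.ae_eq_set]
  constructor
  · refine measure_mono_null ?_ (prod_zero_zero_null p)
    rintro ⟨x, y⟩ ⟨hmem, hnot⟩
    simp only [Set.mem_setOf_eq] at hmem
    by_cases hy : y = 0
    · subst hy
      simp only [norm_zero, mul_zero] at hmem
      have : x = 0 := norm_eq_zero.mp hmem
      simp [this]
    · exfalso
      apply hnot
      rw [Set.mem_iUnion]
      set m : ℕ := y.valuation with hm
      have hym : y ∈ S p m := mem_S_valuation p hy
      rw [mem_S_iff] at hym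
      have hxnorm : ‖x‖ = (p:ℝ) ^ ((1:ℤ) - (m:ℤ)) := by
        rw [hmem, hym, sub_eq_add_neg, zpow_add₀ hp0.ne', zpow_one]
      have hm1 : 1 ≤ m := by
        by_contra hcon
        have hm0 : m = 0 := by omega
        rw [hm0] at hxnorm
        simp only [Nat.cast_zero, sub_zero, zpow_one] at hxnorm
        have := x.norm_le_one
        rw [hxnorm] at this
        linarith [one_lt_p p]
      refine ⟨m - 1, ?_, ?_⟩
      · rw [mem_S_iff, hxnorm]
        congr 1
        omega
      · have h : m - 1 + 1 = m := by omega
        show y ∈ S p (m - 1 + 1)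
        rw [h, mem_S_iff]
        exact hym
  · have : (⋃ n : ℕ, (S p n ×ˢ S p (n+1))) \
        {q : ℤ_[p] × ℤ_[p] | ‖q.1‖ = p * ‖q.2‖} = ∅ := by
      rw [Set.diff_eq_empty]
      rintro ⟨x, y⟩ hq
      rw [Set.mem_iUnion] at hq
      obtain ⟨n, h1, h2⟩ := hq
      rw [mem_S_iff] at h1 h2
      simp only [Set.mem_setOf_eq]
      have he : ((p:ℝ)) * (p:ℝ) ^ (-((n+1:ℕ):ℤ)) = (p:ℝ) ^ (-(n:ℤ)) := by
        rw [show (-(n:ℤ)) = 1 + (-((n+1:ℕ):ℤ)) by push_cast; ring,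
          zpow_add₀ hp0.ne', zpow_one]
      rw [h1, h2, he]
    rw [this]
    simp

end St16

theorem stmt_16 (p : ℕ) [Fact p.Prime] (v : ℕ) (s : ℝ) (hs : 3 < s) :
    ((1 - (p : ℝ)⁻¹)⁻¹) ^ 2 *
        ∫ t in {q : ℤ_[p] × ℤ_[p] | ‖q.1‖ = ‖q.2‖},
          ‖t.1‖ ^ (s - 2) * ‖t.2‖ ^ (s - 2) ∂((μ p).prod (μ p)) =
      zetap p (2 * s - 2) ∧
    ((1 - (p : ℝ)⁻¹)⁻¹) ^ 2 *
        ∫ t in {q : ℤ_[p] × ℤ_[p] | ‖q.1‖ = p * ‖q.2‖},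
          ‖t.1‖ ^ (s - 2) * ‖t.2‖ ^ (s - 2) ∂((μ p).prod (μ p)) =
      (p : ℝ) ^ (1 - s) * zetap p (2 * s - 2) := by
  have hp0 : (0:ℝ) < p := by linarith [St16.one_lt_p p]
  have hane : (1 - (p:ℝ)⁻¹) ≠ 0 := by
    have := St16.a_lt_one p
    intro h
    rw [sub_eq_zero] at h
    linarith
  have hinv : ∀ x : ℝ, ((p:ℝ)⁻¹) ^ x = (p:ℝ) ^ (-x) := by
    intro x
    rw [Real.inv_rpow hp0.le, ← Real.rpow_neg hp0.le]
  have hzeta : zetap p (2*s-2) = (1 - ((p:ℝ)⁻¹) ^ (2*s-2))⁻¹ := by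
    rw [zetap, hinv]
  constructor
  · rw [setIntegral_congr_set (St16.Aeq1 p), St16.main_calc p 0 s hs, hzeta]
    rw [pow_zero, mul_one, ← mul_assoc, ← mul_pow, inv_mul_cancel₀ hane, one_pow, one_mul]
  · rw [setIntegral_congr_set (St16.Aeq2 p), St16.main_calc p 1 s hs, hzeta]
    rw [pow_one, hinv, neg_sub]
    rw [show (1 - (p:ℝ)⁻¹)^2 * (p:ℝ)^(1-s) * (1 - ((p:ℝ)⁻¹)^(2*s-2))⁻¹
        = (1 - (p:ℝ)⁻¹)^2 * ((p:ℝ)^(1-s) * (1 - ((p:ℝ)⁻¹)^(2*s-2))⁻¹) by ring,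
      ← mul_assoc, ← mul_pow, inv_mul_cancel₀ hane, one_pow, one_mul]
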